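/- Let R be a right duo ring. Then every R-module is fusible if and only if R is a division ring. -/
import Mathlib


open MulOpposite

/-- `M` is a fusible right `R`-module: every nonzero element is the sum of an element
with nonzero annihilator and an element with zero annihilator. -/
def FusibleModule (R M : Type*) [Ring R] [AddCommGroup M] [Module Rᵐᵒᵖ M] : Prop :=
  ∀ m : M, m ≠ 0 → ∃ x y : M, (∃ r : R, r ≠ 0 ∧ op r • x = 0) ∧
    (∀ r : R, op r • y = 0 → r = 0) ∧ m = x + y

/-- For a right duo ring `R`, every right `R`-module is fusible iff `R` is a
division ring. -/
theorem every_module_fusible_iff_divisionRing (R : Type u) [Ring R] [Nontrivial R]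
    (hduo : ∀ a r : R, ∃ r' : R, r * a = a * r') :
    (∀ (M : Type u) [AddCommGroup M] [Module Rᵐᵒᵖ M], FusibleModule R M) ↔
      ∀ a : R, a ≠ 0 → IsUnit a := by
  constructor
  · intro h
    -- first, every nonzero element has a right inverse
    have hr : ∀ a : R, a ≠ 0 → ∃ b : R, a * b = 1 := by
      intro a ha
      set I : Submodule Rᵐᵒᵖ R := Submodule.span Rᵐᵒᵖ ({a} : Set R) with hI
      by_cases h1 : (1 : R) ∈ I
      · rw [hI, Submodule.mem_span_singleton] at h1
        obtain ⟨c, hc⟩ := h1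
        exact ⟨c.unop, hc⟩
      · exfalso
        have hm : (Submodule.Quotient.mk (1 : R) : R ⧸ I) ≠ 0 := by
          intro hc
          exact h1 ((Submodule.Quotient.mk_eq_zero I).mp hc)
        obtain ⟨x, y, _, hy, _⟩ := h (R ⧸ I) (Submodule.Quotient.mk (1 : R)) hm
        obtain ⟨b, rfl⟩ := Submodule.Quotient.mk_surjective I y
        apply ha
        apply hy a
        rw [← Submodule.Quotient.mk_smul, Submodule.Quotient.mk_eq_zero]
        obtain ⟨r', hr'⟩ := hduo a b
        have : (op a) • b = b * a := rfl
        rw [this, hr']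
        rw [hI, Submodule.mem_span_singleton]
        exact ⟨op r', rfl⟩
    intro a ha
    obtain ⟨b, hab⟩ := hr a ha
    have hb : b ≠ 0 := by
      rintro rfl
      rw [mul_zero] at hab
      exact one_ne_zero hab.symm
    obtain ⟨c, hbc⟩ := hr b hb
    have hac : a = c := by
      calc a = a * (b * c) := by rw [hbc, mul_one]
        _ = (a * b) * c := by rw [mul_assoc]
        _ = c := by rw [hab, one_mul]
    exact ⟨⟨a, b, hab, by rw [hac] at hab ⊢; exact hbc⟩, rfl⟩
  · intro h M _ _ m hm
    refine ⟨0, m, ⟨1, one_ne_zero, smul_zero _⟩, ?_, (zero_add m).symm⟩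
    intro r hrm
    by_contra hr
    obtain ⟨u, hu⟩ := (h r hr).op
    apply hm
    calc m = (↑u⁻¹ : Rᵐᵒᵖ) • (↑u : Rᵐᵒᵖ) • m := by rw [smul_smul, u.inv_mul, one_smul]
      _ = 0 := by rw [hu, hrm, smul_zero]
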